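/- For all natural numbers n ≥ 1, n' ≥ 1, m, and m', the system of congruences x ≡ m (mod n) and f(x) ≡ m' (mod n') has a solution x in the natural numbers. -/

import Mathlib

noncomputable def phi : ℝ := (1 + Real.sqrt 5) / 2

noncomputable def f (n : ℕ) : ℕ := ⌊phi * n⌋₊

/-- Pigeonhole step: some positive multiple of an irrational `θ` has fractional part
within `ε` of `0` or `1`. -/
lemma exists_small_step (θ : ℝ) (hθ : Irrational θ) {ε : ℝ} (hε : 0 < ε) :
    ∃ d : ℕ, 1 ≤ d ∧ ((0 < Int.fract ((d : ℝ) * θ) ∧ Int.fract ((d : ℝ) * θ) < ε) ∨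
      (0 < 1 - Int.fract ((d : ℝ) * θ) ∧ 1 - Int.fract ((d : ℝ) * θ) < ε)) := by
  obtain ⟨N₀, hN₀⟩ := exists_nat_one_div_lt hε
  set N : ℕ := N₀ + 1 with hN
  have hNpos : (0 : ℝ) < N := by positivity
  have hNe : (1 : ℝ) / N < ε := by exact_mod_cast hN₀
  have main : ∀ a b : ℕ, a < b →
      ⌊(N : ℝ) * Int.fract ((a : ℝ) * θ)⌋₊ = ⌊(N : ℝ) * Int.fract ((b : ℝ) * θ)⌋₊ →
      ∃ d : ℕ, 1 ≤ d ∧ ((0 < Int.fract ((d : ℝ) * θ) ∧ Int.fract ((d : ℝ) * θ) < ε) ∨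
        (0 < 1 - Int.fract ((d : ℝ) * θ) ∧ 1 - Int.fract ((d : ℝ) * θ) < ε)) := by
    intro a b hlt heq
    set d : ℕ := b - a with hd
    have hd1 : 1 ≤ d := by omega
    have hdb : (d : ℝ) = (b : ℝ) - a := by rw [hd, Nat.cast_sub hlt.le]
    have hfa := Nat.floor_le (mul_nonneg hNpos.le (Int.fract_nonneg ((a : ℝ) * θ)))
    have hfb := Nat.floor_le (mul_nonneg hNpos.le (Int.fract_nonneg ((b : ℝ) * θ)))
    have hfa' := Nat.lt_floor_add_one ((N : ℝ) * Int.fract ((a : ℝ) * θ))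
    have hfb' := Nat.lt_floor_add_one ((N : ℝ) * Int.fract ((b : ℝ) * θ))
    rw [heq] at hfa hfa'
    set s : ℝ := Int.fract ((b : ℝ) * θ) - Int.fract ((a : ℝ) * θ) with hs
    have hNs1 : (N : ℝ) * s < 1 := by nlinarith
    have hNs2 : -1 < (N : ℝ) * s := by nlinarith
    have hs_lt : s < 1 / N := by rw [lt_div_iff₀ hNpos]; linarith
    have hs_gt : -(1 / N) < s := by
      rw [neg_lt]
      rw [lt_div_iff₀ hNpos]; linarith
    have habs1 : s < ε := lt_trans hs_lt hNe
    have habs2 : -ε < s := by linarith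
    have hsne : s ≠ 0 := by
      intro h0
      have : Int.fract ((b : ℝ) * θ) = Int.fract ((a : ℝ) * θ) := by
        rw [hs] at h0; linarith
      rw [Int.fract_eq_fract] at this
      obtain ⟨z, hz⟩ := this
      apply hθ
      refine ⟨(z : ℚ) / (d : ℚ), ?_⟩
      have hdne : (d : ℝ) ≠ 0 := by positivity
      push_cast
      rw [div_eq_iff hdne, hdb]
      linarith [hz]
    have hf0a := Int.fract_nonneg ((a : ℝ) * θ)
    have hf0b := Int.fract_nonneg ((b : ℝ) * θ)
    have hf1a := Int.fract_lt_one ((a : ℝ) * θ)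
    have hf1b := Int.fract_lt_one ((b : ℝ) * θ)
    have hfd : Int.fract ((d : ℝ) * θ) = Int.fract s := by
      have h1 : (d : ℝ) * θ = (⌊(b : ℝ) * θ⌋ - ⌊(a : ℝ) * θ⌋ : ℤ) + s := by
        rw [hdb, hs]
        push_cast
        unfold Int.fract
        ring
      rw [h1, Int.fract_intCast_add]
    refine ⟨d, hd1, ?_⟩
    rcases lt_or_gt_of_ne hsne with hneg | hpos
    · right
      have hs1 : -1 < s := by linarith
      have : Int.fract s = 1 + s :=
        Int.fract_eq_iff.2 ⟨by linarith, by linarith, ⟨-1, by push_cast; ring⟩⟩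
      rw [hfd, this]
      constructor <;> linarith
    · left
      have hslt : s < 1 := by linarith
      rw [hfd, Int.fract_eq_self.2 ⟨le_of_lt hpos, hslt⟩]
      exact ⟨hpos, habs1⟩
  -- pigeonhole on t ↦ ⌊N * fract (t θ)⌋₊
  have hmaps : ∀ t ∈ Finset.range (N + 1),
      (⌊(N : ℝ) * Int.fract ((t : ℝ) * θ)⌋₊) ∈ Finset.range N := by
    intro t _
    rw [Finset.mem_range]
    have h1 : (N : ℝ) * Int.fract ((t : ℝ) * θ) < N := by
      nlinarith [Int.fract_lt_one ((t : ℝ) * θ), Int.fract_nonneg ((t : ℝ) * θ)]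
    exact_mod_cast Nat.floor_lt (mul_nonneg hNpos.le (Int.fract_nonneg _)) |>.2 h1
  obtain ⟨a, ha, b, hb, hab, heq⟩ :=
    Finset.exists_ne_map_eq_of_card_lt_of_maps_to (by simp) hmaps
  rcases lt_or_gt_of_ne hab with h | h
  · exact main a b h heq
  · exact main b a h heq.symm

/-- Density of the forward orbit of an irrational rotation: for any `c` and `ε > 0`
there is a natural `t` with `fract (t θ + c) < ε`. -/
lemma exists_fract_lt (θ : ℝ) (hθ : Irrational θ) (c : ℝ) {ε : ℝ} (hε : 0 < ε) :
    ∃ t : ℕ, Int.fract ((t : ℝ) * θ + c) < ε := by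
  obtain ⟨d, hd1, hcase⟩ := exists_small_step θ hθ hε
  set j : ℤ := ⌊(d : ℝ) * θ⌋ with hj
  have hdθ : (d : ℝ) * θ = j + Int.fract ((d : ℝ) * θ) := by
    rw [hj]; unfold Int.fract; ring
  have hc : c = ⌊c⌋ + Int.fract c := by unfold Int.fract; ring
  have hcf0 := Int.fract_nonneg c
  have hcf1 := Int.fract_lt_one c
  have hδnn := Int.fract_nonneg ((d : ℝ) * θ)
  have hδlt := Int.fract_lt_one ((d : ℝ) * θ)
  rcases hcase with ⟨hδ0, hδε⟩ | ⟨hη0, hηε⟩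
  · -- small positive step δ : climb up to just past 1
    set δ : ℝ := Int.fract ((d : ℝ) * θ) with hδ
    set k : ℕ := ⌈(1 - Int.fract c) / δ⌉₊ with hk
    have hk1 : 1 - Int.fract c ≤ (k : ℝ) * δ := by
      have := Nat.le_ceil ((1 - Int.fract c) / δ)
      calc 1 - Int.fract c = ((1 - Int.fract c) / δ) * δ := by field_simp
        _ ≤ (k : ℝ) * δ := by apply mul_le_mul_of_nonneg_right this (le_of_lt hδ0)
    have hk2 : (k : ℝ) * δ < 1 - Int.fract c + δ := by
      have hnn : 0 ≤ (1 - Int.fract c) / δ := div_nonneg (by linarith) hδ0.le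
      have h2 : (k : ℝ) < (1 - Int.fract c) / δ + 1 := Nat.ceil_lt_add_one hnn
      calc (k : ℝ) * δ < ((1 - Int.fract c) / δ + 1) * δ := by
            apply mul_lt_mul_of_pos_right h2 hδ0
        _ = 1 - Int.fract c + δ := by field_simp
    refine ⟨k * d, ?_⟩
    have hexp : ((k * d : ℕ) : ℝ) * θ + c =
        ((k : ℤ) * j + ⌊c⌋ : ℤ) + ((k : ℝ) * δ + Int.fract c) := by
      push_cast
      nlinarith [hdθ, hc]
    rw [hexp, Int.fract_intCast_add]
    have h1le : (1 : ℝ) ≤ (k : ℝ) * δ + Int.fract c := by linarith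
    have h2lt : (k : ℝ) * δ + Int.fract c < 2 := by linarith
    have : Int.fract ((k : ℝ) * δ + Int.fract c) = (k : ℝ) * δ + Int.fract c - 1 :=
      Int.fract_eq_iff.2 ⟨by linarith, by linarith, ⟨1, by push_cast; ring⟩⟩
    rw [this]
    linarith
  · -- small negative step η : descend to just above 0
    set η : ℝ := 1 - Int.fract ((d : ℝ) * θ) with hη
    set k : ℕ := ⌊Int.fract c / η⌋₊ with hk
    have hk1 : (k : ℝ) * η ≤ Int.fract c := by
      have := Nat.floor_le (div_nonneg hcf0 hη0.le)
      calc (k : ℝ) * η ≤ (Int.fract c / η) * η := by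
            apply mul_le_mul_of_nonneg_right this (le_of_lt hη0)
        _ = Int.fract c := by field_simp
    have hk2 : Int.fract c < (k : ℝ) * η + η := by
      have := Nat.lt_floor_add_one (Int.fract c / η)
      calc Int.fract c = (Int.fract c / η) * η := by field_simp
        _ < ((k : ℝ) + 1) * η := by apply mul_lt_mul_of_pos_right this hη0
        _ = (k : ℝ) * η + η := by ring
    refine ⟨k * d, ?_⟩
    have hexp : ((k * d : ℕ) : ℝ) * θ + c =
        ((k : ℤ) * (j + 1) + ⌊c⌋ : ℤ) + (Int.fract c - (k : ℝ) * η) := by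
      push_cast
      nlinarith [hdθ, hc]
    rw [hexp, Int.fract_intCast_add,
      Int.fract_eq_self.2 ⟨by linarith, by linarith⟩]
    linarith

theorem congruence_system_solvable (n : ℕ) (hn : 1 ≤ n) (n' : ℕ) (hn' : 1 ≤ n')
    (m m' : ℕ) :
    ∃ x : ℕ, x ≡ m [MOD n] ∧ f x ≡ m' [MOD n'] := by
  have hphi : Irrational phi := by
    have := Real.goldenRatio_irrational
    rwa [Real.goldenRatio] at this
  have hn'pos : (0 : ℝ) < n' := by exact_mod_cast hn'
  have hnpos : (0 : ℝ) < n := by exact_mod_cast hn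
  set θ : ℝ := (n : ℝ) * phi / n' with hθdef
  have hθ : Irrational θ := by
    have h1 : Irrational ((n : ℝ) * phi) :=
      hphi.natCast_mul (by omega)
    exact h1.div_natCast (by omega)
  set c : ℝ := ((m : ℝ) * phi - m') / n' with hcdef
  obtain ⟨t, ht⟩ := exists_fract_lt θ hθ c (show (0:ℝ) < 1 / n' by positivity)
  set q : ℤ := ⌊(t : ℝ) * θ + c⌋ with hq
  have hr0 : 0 ≤ (t : ℝ) * θ + c - q := by
    rw [hq]; exact sub_nonneg.2 (Int.floor_le _)
  have hr1 : (t : ℝ) * θ + c - q < 1 / n' := by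
    have : Int.fract ((t : ℝ) * θ + c) = (t : ℝ) * θ + c - q := rfl
    linarith [ht, this]
  have hrn : ((t : ℝ) * θ + c - q) * n' < 1 := by
    have := mul_lt_mul_of_pos_right hr1 hn'pos
    rwa [one_div, inv_mul_cancel₀ hn'pos.ne'] at this
  have hrn0 : 0 ≤ ((t : ℝ) * θ + c - q) * n' := mul_nonneg hr0 hn'pos.le
  refine ⟨m + n * t, ?_, ?_⟩
  · simp [Nat.ModEq, Nat.add_mul_mod_self_left]
  · -- compute the floor
    have hx : ((m + n * t : ℕ) : ℝ) = (m : ℝ) + n * t := by push_cast; ring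
    have hval : phi * ((m + n * t : ℕ) : ℝ) =
        ((m' : ℝ) + q * n') + ((t : ℝ) * θ + c - q) * n' := by
      rw [hx, hθdef, hcdef]
      field_simp
      ring
    have hfloor : ⌊phi * ((m + n * t : ℕ) : ℝ)⌋ = (m' : ℤ) + q * n' := by
      rw [Int.floor_eq_iff]
      constructor
      · rw [hval]; push_cast; linarith
      · rw [hval]; push_cast; linarith
    have hphipos : 0 < phi := by
      unfold phi
      have : (0:ℝ) ≤ Real.sqrt 5 := Real.sqrt_nonneg 5
      linarith
    have hnn : (0 : ℤ) ≤ (m' : ℤ) + q * n' := by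
      rw [← hfloor]
      apply Int.floor_nonneg.2
      positivity
    have hfx : (f (m + n * t) : ℤ) = (m' : ℤ) + q * n' := by
      unfold f
      rw [← Int.floor_toNat, hfloor, Int.toNat_of_nonneg hnn]
    rw [← Int.natCast_modEq_iff]
    calc (f (m + n * t) : ℤ) = (m' : ℤ) + q * n' := hfx
      _ ≡ (m' : ℤ) [ZMOD (n' : ℤ)] := (Int.modEq_iff_dvd.2 ⟨-q, by ring⟩)
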